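/- Let ρ_1, …, ρ_L ≥ 0 with Σ_{ℓ=1}^L ℓ·ρ_ℓ = 1. Let A be the L×L matrix with A_{i,j} = ρ_j + [j = i-1] (Kronecker delta of j and i−1). Then the characteristic polynomial of A satisfies det(A − λI) = (−1)^L (λ^L − Σ_{j=0}^{L-1} (Σ_{ℓ=L-j}^L ρ_ℓ) λ^j). -/

import Mathlib

open Matrix Finset

theorem key (L : ℕ) (ρ : Fin L → ℝ)
    (A : Matrix (Fin L) (Fin L) ℝ)
    (hA : ∀ i j, A i j = ρ j + if (j : ℕ) + 1 = (i : ℕ) then 1 else 0)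
    (lam : ℝ) (hlam : lam ≠ 0) :
    (A - lam • (1 : Matrix (Fin L) (Fin L) ℝ)).det
      = (-1) ^ L * (lam ^ L - ∑ j : Fin L,
          (∑ ℓ ∈ Finset.univ.filter (fun ℓ : Fin L => L - (j : ℕ) ≤ (ℓ : ℕ) + 1), ρ ℓ)
            * lam ^ (j : ℕ)) := by
  set D : Matrix (Fin L) (Fin L) ℝ :=
    Matrix.of fun i j => (if (j : ℕ) + 1 = (i : ℕ) then (1:ℝ) else 0)
      - lam * (if i = j then (1:ℝ) else 0) with hD
  set x : Fin L → ℝ := fun i => -∑ m ∈ Finset.range ((i : ℕ) + 1), (1/lam) ^ (m + 1) with hx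
  -- D x = all ones
  have hDx : ∀ i : Fin L, ∑ k : Fin L, D i k * x k = 1 := by
    intro i
    have hsplit : ∀ k : Fin L, D i k * x k =
        (if (k : ℕ) + 1 = (i : ℕ) then x k else 0) - lam * (if i = k then x k else 0) := by
      intro k
      simp only [hD, Matrix.of_apply]
      by_cases h1 : (k : ℕ) + 1 = (i : ℕ) <;> by_cases h2 : i = k <;>
        simp [h1, h2] <;> ring
    rw [Finset.sum_congr rfl fun k _ => hsplit k, Finset.sum_sub_distrib, ← Finset.mul_sum,
      Finset.sum_ite_eq Finset.univ i x, if_pos (Finset.mem_univ i)]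
    rcases Nat.eq_zero_or_pos (i : ℕ) with h0 | hpos
    · have h1 : ∑ k : Fin L, (if (k : ℕ) + 1 = (i : ℕ) then x k else 0) = 0 := by
        apply Finset.sum_eq_zero; intro k _; rw [if_neg]; omega
      have hxi : x i = -(1/lam) := by simp [hx, h0]
      rw [h1, hxi]
      field_simp
      norm_num
    · have hiL : (i : ℕ) - 1 < L := by omega
      have h1 : ∑ k : Fin L, (if (k : ℕ) + 1 = (i : ℕ) then x k else 0) = x ⟨(i:ℕ)-1, hiL⟩ := by
        rw [Finset.sum_eq_single_of_mem ⟨(i:ℕ)-1, hiL⟩ (Finset.mem_univ _)]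
        · rw [if_pos]; simp; omega
        · intro k _ hk; rw [if_neg]; intro h; apply hk; apply Fin.ext; simp; omega
      rw [h1]
      simp only [hx]
      have hpred : (i : ℕ) - 1 + 1 = (i : ℕ) := by omega
      rw [hpred]
      have hstep : ∀ m : ℕ, lam * (1/lam) ^ (m + 1) = (1/lam) ^ m := by
        intro m; rw [pow_succ]; field_simp
      have h2 : lam * ∑ m ∈ Finset.range ((i:ℕ) + 1), (1/lam) ^ (m + 1)
          = 1 + ∑ m ∈ Finset.range (i:ℕ), (1/lam) ^ (m + 1) := by
        rw [Finset.mul_sum, Finset.sum_congr rfl fun m _ => hstep m,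
          Finset.sum_range_succ']
        simp [add_comm]
      rw [mul_neg, h2]
      ring
  -- factorization
  have hfact : A - lam • (1 : Matrix (Fin L) (Fin L) ℝ)
      = D * (1 + Matrix.replicateCol Unit x * Matrix.replicateRow Unit ρ) := by
    ext i j
    rw [Matrix.mul_apply]
    have hterm : ∀ k : Fin L, D i k *
        ((1 + Matrix.replicateCol Unit x * Matrix.replicateRow Unit ρ) : Matrix (Fin L) (Fin L) ℝ) k j
        = (if k = j then D i k else 0) + (D i k * x k) * ρ j := by
      intro k
      have happ : ((1 + Matrix.replicateCol Unit x * Matrix.replicateRow Unit ρ) : Matrix (Fin L) (Fin L) ℝ) k j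
          = (if k = j then 1 else 0) + x k * ρ j := by
        simp [Matrix.add_apply, Matrix.one_apply, Matrix.mul_apply]
      rw [happ]
      split_ifs <;> ring
    rw [Finset.sum_congr rfl fun k _ => hterm k, Finset.sum_add_distrib, ← Finset.sum_mul,
      hDx i, Finset.sum_ite_eq' Finset.univ j (fun k => D i k), if_pos (Finset.mem_univ j)]
    simp only [hD, Matrix.of_apply, Matrix.sub_apply, Matrix.smul_apply, Matrix.one_apply, hA,
      smul_eq_mul]
    ring
  -- determinant of D
  have hdet : D.det = (-lam) ^ L := by
    rw [Matrix.det_of_lowerTriangular D ?_]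
    · have h1 : ∀ i : Fin L, D i i = -lam := by
        intro i
        simp [hD]
      rw [Finset.prod_congr rfl fun i _ => h1 i, Finset.prod_const, Finset.card_univ,
        Fintype.card_fin]
    · intro i j hij
      have hij' : i < j := hij
      simp only [hD, Matrix.of_apply]
      rw [if_neg (by omega), if_neg (by exact Fin.ne_of_lt hij')]
      ring
  rw [hfact, Matrix.det_mul, Matrix.det_one_add_replicateCol_mul_replicateRow, hdet]
  -- algebra
  have hdot : ρ ⬝ᵥ x = -∑ j : Fin L, ρ j * ∑ m ∈ Finset.range ((j:ℕ)+1), (1/lam) ^ (m+1) := by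
    simp only [dotProduct, hx, mul_neg, Finset.sum_neg_distrib]
  rw [hdot, neg_pow lam L]
  have hpow : ∀ j : Fin L, ∀ m ∈ Finset.range ((j:ℕ)+1),
      lam ^ L * (1/lam) ^ (m+1) = lam ^ (L - 1 - m) := by
    intro j m hm
    rw [Finset.mem_range] at hm
    have h1 : lam ^ (L - 1 - m) * lam ^ (m+1) = lam ^ L := by
      rw [← pow_add]; congr 1; omega
    rw [← h1, one_div, inv_pow, mul_assoc, mul_inv_cancel₀ (pow_ne_zero _ hlam), mul_one]
  -- the coefficient sum, rewritten
  have hcoef : ∑ j : Fin L,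
      (∑ ℓ ∈ Finset.univ.filter (fun ℓ : Fin L => L - (j : ℕ) ≤ (ℓ : ℕ) + 1), ρ ℓ)
        * lam ^ (j : ℕ)
      = ∑ ℓ : Fin L, ρ ℓ * ∑ m ∈ Finset.range ((ℓ:ℕ)+1), lam ^ (L - 1 - m) := by
    have step1 : ∀ j : Fin L,
        (∑ ℓ ∈ Finset.univ.filter (fun ℓ : Fin L => L - (j : ℕ) ≤ (ℓ : ℕ) + 1), ρ ℓ)
          * lam ^ (j : ℕ)
        = ∑ ℓ : Fin L, (if L ≤ (ℓ:ℕ) + 1 + (j:ℕ) then ρ ℓ * lam ^ (j:ℕ) else 0) := by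
      intro j
      rw [Finset.sum_mul, Finset.sum_filter]
      refine Finset.sum_congr rfl fun ℓ _ => ?_
      rw [if_congr (by omega : (L - (j:ℕ) ≤ (ℓ:ℕ) + 1) ↔ (L ≤ (ℓ:ℕ) + 1 + (j:ℕ))) rfl rfl]
    rw [Finset.sum_congr rfl fun j _ => step1 j, Finset.sum_comm]
    refine Finset.sum_congr rfl fun ℓ _ => ?_
    have step2 : ∑ j : Fin L, (if L ≤ (ℓ:ℕ) + 1 + (j:ℕ) then ρ ℓ * lam ^ (j:ℕ) else 0)
        = ρ ℓ * ∑ j : Fin L, (if L ≤ (ℓ:ℕ) + 1 + (j:ℕ) then lam ^ (j:ℕ) else 0) := by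
      rw [Finset.mul_sum]
      refine Finset.sum_congr rfl fun j _ => ?_
      by_cases h : L ≤ (ℓ:ℕ) + 1 + (j:ℕ) <;> simp [h]
    rw [step2]
    congr 1
    rw [Fin.sum_univ_eq_sum_range (fun j => if L ≤ (ℓ:ℕ) + 1 + j then lam ^ j else 0) L,
      ← Finset.sum_filter]
    have hℓL : (ℓ:ℕ) < L := ℓ.isLt
    have hfil : (Finset.range L).filter (fun j => L ≤ (ℓ:ℕ) + 1 + j)
        = Finset.Ico (L - 1 - (ℓ:ℕ)) L := by
      ext j
      simp only [Finset.mem_filter, Finset.mem_range, Finset.mem_Ico]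
      omega
    rw [hfil, Finset.sum_Ico_eq_sum_range, show L - (L - 1 - (ℓ:ℕ)) = (ℓ:ℕ) + 1 from by omega]
    rw [← Finset.sum_range_reflect (fun t => lam ^ (L - 1 - (ℓ:ℕ) + t)) ((ℓ:ℕ)+1)]
    refine Finset.sum_congr rfl fun m hm => ?_
    rw [Finset.mem_range] at hm
    congr 1
    omega
  rw [hcoef]
  have hbig : lam ^ L * ∑ j : Fin L, ρ j * ∑ m ∈ Finset.range ((j:ℕ)+1), (1/lam) ^ (m+1)
      = ∑ j : Fin L, ρ j * ∑ m ∈ Finset.range ((j:ℕ)+1), lam ^ (L - 1 - m) := by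
    rw [Finset.mul_sum]
    refine Finset.sum_congr rfl fun j _ => ?_
    rw [mul_left_comm]
    congr 1
    rw [Finset.mul_sum]
    exact Finset.sum_congr rfl fun m hm => hpow j m hm
  linear_combination (-(-1:ℝ)^L) * hbig

theorem stmt3 (L : ℕ) (ρ : Fin L → ℝ) (hρ : ∀ ℓ, 0 ≤ ρ ℓ)
    (hsum : ∑ ℓ : Fin L, (((ℓ : ℕ) : ℝ) + 1) * ρ ℓ = 1)
    (A : Matrix (Fin L) (Fin L) ℝ)
    (hA : ∀ i j, A i j = ρ j + if (j : ℕ) + 1 = (i : ℕ) then 1 else 0)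
    (lam : ℝ) :
    (A - lam • (1 : Matrix (Fin L) (Fin L) ℝ)).det
      = (-1) ^ L * (lam ^ L - ∑ j : Fin L,
          (∑ ℓ ∈ Finset.univ.filter (fun ℓ : Fin L => L - (j : ℕ) ≤ (ℓ : ℕ) + 1), ρ ℓ)
            * lam ^ (j : ℕ)) := by
  have hf : Continuous fun t : ℝ => (A - t • (1 : Matrix (Fin L) (Fin L) ℝ)).det :=
    Continuous.matrix_det (continuous_const.sub (continuous_id.smul continuous_const))
  have hg : Continuous fun t : ℝ => (-1 : ℝ) ^ L * (t ^ L - ∑ j : Fin L,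
      (∑ ℓ ∈ Finset.univ.filter (fun ℓ : Fin L => L - (j : ℕ) ≤ (ℓ : ℕ) + 1), ρ ℓ)
        * t ^ (j : ℕ)) := by
    apply continuous_const.mul
    exact (continuous_pow L).sub
      (continuous_finset_sum _ fun j _ => continuous_const.mul (continuous_pow (j : ℕ)))
  have heq : (fun t : ℝ => (A - t • (1 : Matrix (Fin L) (Fin L) ℝ)).det)
      = fun t : ℝ => (-1 : ℝ) ^ L * (t ^ L - ∑ j : Fin L,
          (∑ ℓ ∈ Finset.univ.filter (fun ℓ : Fin L => L - (j : ℕ) ≤ (ℓ : ℕ) + 1), ρ ℓ)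
            * t ^ (j : ℕ)) := by
    apply Continuous.ext_on (dense_compl_singleton (0:ℝ)) hf hg
    intro t ht
    exact key L ρ A hA t ht
  exact congrFun heq lam
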